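/- Recognition of virtual itineraries. Let 0 ≤ α < 1 < β, k := ⌈α+β⌉, A := {0,…,k−1}, γ := α+β−k+1. Suppose u, v ∈ A^ℕ satisfy φ̄_∞^{α,β}(u) = 0, φ̄_∞^{α,β}(σu) = α, φ̄_∞^{α,β}(v) = 1, φ̄_∞^{α,β}(σv) = γ, and u ≼ σⁿu ≺ v and u ≺ σⁿv ≼ v for all n ≥ 0. Then the following are equivalent: (1) u = u^{α,β}; (2) φ̄_∞^{α,β}(σⁿu) < 1 for all n ≥ 0; (3) φ̄_∞^{α,β}(σⁿv) > 0 for all n ≥ 0; (4) v = v^{α,β}. -/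

import Mathlib

open Filter Set

/-- The shift map on one-sided sequences. -/
def shft (x : ℕ → ℕ) : ℕ → ℕ := fun n => x (n + 1)

/-- Strict lexicographic order on one-sided sequences:
`x ≺ y` iff they differ and `x m < y m` at the first index `m` where they differ. -/
def lexLt (x y : ℕ → ℕ) : Prop := ∃ m, (∀ i, i < m → x i = y i) ∧ x m < y m

/-- Lexicographic order `x ≼ y` on one-sided sequences. -/
def lexLe (x y : ℕ → ℕ) : Prop := x = y ∨ lexLt x y

/-- The map `φ̄^{α,β} : ℝ → [0,1]`:  `0` for `t ≤ α`, `(t-α)/β` for `α ≤ t ≤ α+β`,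
`1` for `t ≥ α+β`. -/
noncomputable def phiB (α β t : ℝ) : ℝ :=
  if t ≤ α then 0 else if α + β ≤ t then 1 else (t - α) / β

/-- `φ̄ₙ^{α,β}(x) = φ̄^{α,β}(x₀ + φ̄^{α,β}(x₁ + ⋯ + φ̄^{α,β}(x_{n-1})⋯))`. -/
noncomputable def phiBN (α β : ℝ) : ℕ → (ℕ → ℕ) → ℝ
  | 0, _ => 0
  | n + 1, x => phiB α β (x 0 + phiBN α β n (shft x))

/-- `φ̄_∞^{α,β}(x) = limₙ φ̄ₙ^{α,β}(x)`; the sequence `φ̄ₙ^{α,β}(x)` is nondecreasing in `n`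
and bounded, so its limit is its supremum. -/
noncomputable def phiBInf (α β : ℝ) (x : ℕ → ℕ) : ℝ := ⨆ n, phiBN α β n x

/-- `T̂_{α,β}(x) = βx + α − ⌊βx + α⌋`. -/
noncomputable def Tlow (α β x : ℝ) : ℝ := β * x + α - ⌊β * x + α⌋

/-- `Ť_{α,β}(x) = βx + α + 1 − ⌈βx + α⌉`. -/
noncomputable def Thigh (α β x : ℝ) : ℝ := β * x + α + 1 - ⌈β * x + α⌉

/-- `k = ⌈α + β⌉`, the size of the alphabet `A = {0, …, k-1}`. -/
noncomputable def kAB (α β : ℝ) : ℕ := (⌈α + β⌉).toNat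

/-- The string `u^{α,β}`, the coding of the orbit of `0`:
`u^{α,β}ₙ = ⌊β T̂ⁿ_{α,β}(0) + α⌋`. -/
noncomputable def uItin (α β : ℝ) : ℕ → ℕ := fun n => (⌊β * (Tlow α β)^[n] 0 + α⌋).toNat

/-- The string `v^{α,β}`, the coding of the orbit of `1`:
`v^{α,β}ₙ = ⌈β Ťⁿ_{α,β}(1) + α⌉ − 1`. -/
noncomputable def vItin (α β : ℝ) : ℕ → ℕ := fun n => (⌈β * (Thigh α β)^[n] 1 + α⌉ - 1).toNat

/-- The shift space `Σ(u,v) = {x ∈ A^ℕ : u ≼ σⁿx ≼ v for all n ≥ 0}`, `A = {0,…,k-1}`. -/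
def SigSet (k : ℕ) (u v : ℕ → ℕ) : Set (ℕ → ℕ) :=
  {x | (∀ i, x i < k) ∧ ∀ n, lexLe u (shft^[n] x) ∧ lexLe (shft^[n] x) v}

/-- The number of words of length `n` in the language of `Σ(u,v)` (prefixes of elements). -/
noncomputable def nWords (k : ℕ) (u v : ℕ → ℕ) (n : ℕ) : ℕ :=
  Nat.card {w : Fin n → ℕ // ∃ x ∈ SigSet k u v, ∀ i : Fin n, x i.1 = w i}

/-- The topological entropy (base 2) of `Σ(u,v)`:
`h = limₙ (1/n) log₂ card(Lₙ)` (the limit exists by subadditivity, so it equals the limsup;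
it is `0` when `Σ(u,v) = ∅`). -/
noncomputable def entS (k : ℕ) (u v : ℕ → ℕ) : ℝ :=
  Filter.limsup (fun n : ℕ => Real.logb 2 (nWords k u v n) / (n : ℝ)) Filter.atTop

/-- Concatenation of the word `w₀ ⋯ w_{p-1}` (the first `p` letters of `w`) with the
string `y`. -/
def wcat (p : ℕ) (w y : ℕ → ℕ) : ℕ → ℕ := fun n => if n < p then w n else y (n - p)

section Basic
variable {α β : ℝ}

lemma clamp_mono {a b : ℝ} (h : a ≤ b) : max 0 (min 1 a) ≤ max 0 (min 1 b) := by
  simp only [max_def, min_def]; split_ifs <;> linarith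

lemma clamp_lip {a b : ℝ} (h : a ≤ b) : max 0 (min 1 b) - max 0 (min 1 a) ≤ b - a := by
  simp only [max_def, min_def]; split_ifs <;> linarith

lemma phiB_eq (hβ : 0 < β) (t : ℝ) : phiB α β t = max 0 (min 1 ((t - α) / β)) := by
  unfold phiB; split_ifs with h1 h2
  · have h : (t - α) / β ≤ 0 := div_nonpos_of_nonpos_of_nonneg (by linarith) hβ.le
    rw [min_eq_right (h.trans zero_le_one), max_eq_left h]
  · have h : 1 ≤ (t - α) / β := (le_div_iff₀ hβ).mpr (by linarith)
    rw [min_eq_left h, max_eq_right zero_le_one]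
  · push_neg at h1 h2
    have h0 : 0 ≤ (t - α) / β := div_nonneg (by linarith) hβ.le
    have h1' : (t - α) / β ≤ 1 := (div_le_one hβ).mpr (by linarith)
    rw [min_eq_right h1', max_eq_right h0]

lemma phiB_nonneg (t : ℝ) : 0 ≤ phiB α β t := by
  unfold phiB; split_ifs with h1 h2
  · exact le_refl 0
  · norm_num
  · push_neg at h1 h2
    rcases le_or_gt β 0 with h | h
    · exact le_of_lt (by apply div_pos_of_neg_of_neg <;> linarith)
    · exact div_nonneg (by linarith) h.le

lemma phiB_le_one (hβ : 0 < β) (t : ℝ) : phiB α β t ≤ 1 := by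
  rw [phiB_eq hβ]
  exact max_le (by norm_num) (min_le_left _ _)

lemma phiB_mono (hβ : 0 < β) : Monotone (phiB α β) := by
  intro s t hst
  rw [phiB_eq hβ, phiB_eq hβ]
  exact clamp_mono (by gcongr)

lemma phiB_lip (hβ : 0 < β) {s t : ℝ} (hst : s ≤ t) :
    phiB α β t - phiB α β s ≤ (t - s) / β := by
  rw [phiB_eq hβ, phiB_eq hβ]
  calc max 0 (min 1 ((t - α) / β)) - max 0 (min 1 ((s - α) / β))
      ≤ (t - α) / β - (s - α) / β := clamp_lip (by gcongr)
    _ = (t - s) / β := by ring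

lemma phiB_continuous (hβ : 0 < β) : Continuous (phiB α β) := by
  have : phiB α β = fun t => max 0 (min 1 ((t - α) / β)) := funext (phiB_eq hβ)
  rw [this]
  exact continuous_const.max (continuous_const.min ((continuous_id.sub continuous_const).div_const β))

lemma phiB_eq_zero (hβ : 0 < β) {t : ℝ} (h : phiB α β t = 0) : t ≤ α := by
  unfold phiB at h; split_ifs at h with h1 h2
  · exact h1
  · exact absurd h (by norm_num)
  · push_neg at h1
    have hp : 0 < (t - α) / β := div_pos (by linarith) hβ
    rw [h] at hp; exact absurd hp (lt_irrefl 0)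

lemma phiB_eq_one (hβ : 0 < β) {t : ℝ} (h : phiB α β t = 1) : α + β ≤ t := by
  unfold phiB at h; split_ifs at h with h1 h2
  · exact absurd h (by norm_num)
  · exact h2
  · push_neg at h2
    have hp : (t - α) / β < 1 := (div_lt_one hβ).mpr (by linarith)
    rw [h] at hp; exact absurd hp (lt_irrefl 1)

lemma phiB_interior (hβ : 0 < β) {t s : ℝ} (h : phiB α β s = t) (h0 : 0 < t) (h1 : t < 1) :
    s = β * t + α := by
  unfold phiB at h; split_ifs at h with h2 h3
  · linarith
  · linarith
  · rw [div_eq_iff hβ.ne'] at h; linarith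

end Basic

section Seq
variable {α β : ℝ}

lemma phiBN_nonneg (n : ℕ) (x : ℕ → ℕ) : 0 ≤ phiBN α β n x := by
  cases n with
  | zero => exact le_refl 0
  | succ n => exact phiB_nonneg _

lemma phiBN_le_one (hβ : 0 < β) (n : ℕ) (x : ℕ → ℕ) : phiBN α β n x ≤ 1 := by
  cases n with
  | zero => exact zero_le_one
  | succ n => exact phiB_le_one hβ _

lemma phiBN_mono_n (hβ : 0 < β) : ∀ n (x : ℕ → ℕ), phiBN α β n x ≤ phiBN α β (n + 1) x := by
  intro n
  induction n with
  | zero => intro x; exact phiB_nonneg _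
  | succ n ih =>
    intro x
    exact phiB_mono hβ (by linarith [ih (shft x)])

lemma phiBN_monotone (hβ : 0 < β) (x : ℕ → ℕ) : Monotone (fun n => phiBN α β n x) :=
  monotone_nat_of_le_succ (fun n => phiBN_mono_n hβ n x)

lemma phiBN_bdd (hβ : 0 < β) (x : ℕ → ℕ) : BddAbove (Set.range fun n => phiBN α β n x) :=
  ⟨1, by rintro y ⟨n, rfl⟩; exact phiBN_le_one hβ n x⟩

lemma phiBInf_nonneg (hβ : 0 < β) (x : ℕ → ℕ) : 0 ≤ phiBInf α β x :=
  le_ciSup_of_le (phiBN_bdd hβ x) 0 (le_refl 0)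

lemma phiBInf_le_one (hβ : 0 < β) (x : ℕ → ℕ) : phiBInf α β x ≤ 1 :=
  ciSup_le (fun n => phiBN_le_one hβ n x)

lemma phiBN_tendsto (hβ : 0 < β) (x : ℕ → ℕ) :
    Tendsto (fun n => phiBN α β n x) atTop (nhds (phiBInf α β x)) :=
  tendsto_atTop_ciSup (phiBN_monotone hβ x) (phiBN_bdd hβ x)

/-- The fundamental recursion. -/
lemma phiBInf_rec (hβ : 0 < β) (x : ℕ → ℕ) :
    phiBInf α β x = phiB α β (x 0 + phiBInf α β (shft x)) := by
  have h1 : Tendsto (fun n => phiBN α β (n + 1) x) atTop (nhds (phiBInf α β x)) :=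
    (phiBN_tendsto hβ x).comp (tendsto_add_atTop_nat 1)
  have hc : Tendsto (fun r : ℝ => phiB α β ((x 0 : ℝ) + r))
      (nhds (phiBInf α β (shft x))) (nhds (phiB α β ((x 0 : ℝ) + phiBInf α β (shft x)))) :=
    ((phiB_continuous (α := α) hβ).comp (continuous_const.add continuous_id)).tendsto _
  have h2 : Tendsto (fun n => phiBN α β (n + 1) x) atTop
      (nhds (phiB α β (x 0 + phiBInf α β (shft x)))) := by
    have h3 := hc.comp (phiBN_tendsto hβ (shft x))
    exact h3
  exact tendsto_nhds_unique h1 h2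

lemma phiBN_mono_lex (hβ : 0 < β) : ∀ n (x y : ℕ → ℕ), lexLe x y → phiBN α β n x ≤ phiBN α β n y := by
  intro n
  induction n with
  | zero => intro x y _; exact le_refl 0
  | succ n ih =>
    intro x y h
    rcases h with rfl | ⟨m, ha, hl⟩
    · exact le_refl _
    cases m with
    | zero =>
      have hx : (x 0 : ℝ) + 1 ≤ y 0 := by exact_mod_cast hl
      refine phiB_mono hβ ?_
      have h1 := phiBN_le_one (α := α) hβ n (shft x)
      have h2 := phiBN_nonneg (α := α) (β := β) n (shft y)
      linarith
    | succ m =>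
      have h0 : x 0 = y 0 := ha 0 (Nat.succ_pos m)
      have hlex : lexLe (shft x) (shft y) :=
        Or.inr ⟨m, fun i hi => ha (i + 1) (by omega), hl⟩
      have := ih (shft x) (shft y) hlex
      exact phiB_mono hβ (by rw [h0]; linarith)

lemma phiBInf_mono_lex (hβ : 0 < β) {x y : ℕ → ℕ} (h : lexLe x y) :
    phiBInf α β x ≤ phiBInf α β y :=
  ciSup_mono (phiBN_bdd hβ y) (fun n => phiBN_mono_lex hβ n x y h)

lemma shft_iter (x : ℕ → ℕ) : ∀ n m, shft^[n] x m = x (n + m) := by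
  intro n
  induction n with
  | zero => intro m; simp
  | succ n ih =>
    intro m
    rw [Function.iterate_succ_apply']
    show shft^[n] x (m + 1) = x (n + 1 + m)
    rw [ih]; congr 1; omega

lemma shft_shft_iter (x : ℕ → ℕ) (n : ℕ) : shft (shft^[n] x) = shft^[n+1] x :=
  (Function.iterate_succ_apply' shft n x).symm

lemma lexLe_shft {x y : ℕ → ℕ} (h : lexLe x y) (h0 : y 0 ≤ x 0) : lexLe (shft x) (shft y) := by
  rcases h with rfl | ⟨m, ha, hl⟩
  · exact Or.inl rfl
  cases m with
  | zero => omega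
  | succ m => exact Or.inr ⟨m, fun i hi => ha (i + 1) (by omega), hl⟩

lemma lexLt_shft {x y : ℕ → ℕ} (h : lexLt x y) (h0 : y 0 ≤ x 0) : lexLt (shft x) (shft y) := by
  obtain ⟨m, ha, hl⟩ := h
  cases m with
  | zero => omega
  | succ m => exact ⟨m, fun i hi => ha (i + 1) (by omega), hl⟩

end Seq

section Itin
variable {α β : ℝ}

lemma phiB_fixed (hβ : 0 < β) {t : ℝ} (h0 : 0 ≤ t) (h1 : t ≤ 1) :
    phiB α β (β * t + α) = t := by
  unfold phiB; split_ifs with h2 h3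
  · nlinarith
  · nlinarith
  · field_simp
    ring

/-- If `x` is an itinerary of the orbit `t`, then `φ̄_∞(σⁿ x) = t n`. -/
lemma phiBInf_of_itinerary (hβ : 1 < β) (x : ℕ → ℕ) (t : ℕ → ℝ)
    (ht0 : ∀ n, 0 ≤ t n) (ht1 : ∀ n, t n ≤ 1)
    (hrec : ∀ n, (x n : ℝ) + t (n + 1) = β * t n + α) (n : ℕ) :
    phiBInf α β (shft^[n] x) = t n := by
  have hβ0 : 0 < β := by linarith
  have key : ∀ m n, phiBN α β m (shft^[n] x) ≤ t n ∧
      t n - phiBN α β m (shft^[n] x) ≤ 1 / β ^ m := by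
    intro m
    induction m with
    | zero =>
      intro n
      constructor
      · exact ht0 n
      · norm_num [phiBN]; exact ht1 n
    | succ m ih =>
      intro n
      have hup : phiBN α β (m + 1) (shft^[n] x) = phiB α β (x n + phiBN α β m (shft^[n+1] x)) := by
        show phiB α β ((shft^[n] x) 0 + phiBN α β m (shft (shft^[n] x))) = _
        rw [shft_iter, shft_shft_iter]; norm_num
      obtain ⟨ih1, ih2⟩ := ih (n + 1)
      have harg : (x n : ℝ) + phiBN α β m (shft^[n+1] x) ≤ β * t n + α := by
        rw [← hrec n]; linarith
      constructor
      · rw [hup]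
        calc phiB α β (x n + phiBN α β m (shft^[n+1] x)) ≤ phiB α β (β * t n + α) :=
              phiB_mono hβ0 harg
          _ = t n := phiB_fixed hβ0 (ht0 n) (ht1 n)
      · rw [hup]
        have hlip := phiB_lip (α := α) hβ0 harg
        rw [phiB_fixed hβ0 (ht0 n) (ht1 n)] at hlip
        have hsub : β * t n + α - ((x n : ℝ) + phiBN α β m (shft^[n+1] x)) =
            t (n + 1) - phiBN α β m (shft^[n+1] x) := by
          rw [← hrec n]; ring
        rw [hsub] at hlip
        calc t n - phiB α β (x n + phiBN α β m (shft^[n+1] x))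
            ≤ (t (n + 1) - phiBN α β m (shft^[n+1] x)) / β := hlip
          _ ≤ (1 / β ^ m) / β := by gcongr
          _ = 1 / β ^ (m + 1) := by rw [pow_succ]; ring
  apply le_antisymm
  · exact ciSup_le (fun m => (key m n).1)
  · have hlim : Tendsto (fun m : ℕ => t n - 1 / β ^ m) atTop (nhds (t n)) := by
      have h1 : Tendsto (fun m : ℕ => (1 : ℝ) / β ^ m) atTop (nhds 0) := by
        simp_rw [one_div, ← inv_pow]
        exact tendsto_pow_atTop_nhds_zero_of_lt_one (by positivity)
          (by rw [inv_lt_one_iff₀]; right; exact hβ)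
      simpa using tendsto_const_nhds.sub h1
    refine le_of_tendsto hlim ?_
    filter_upwards with m
    have := (key m n).2
    have hle : phiBN α β m (shft^[n] x) ≤ phiBInf α β (shft^[n] x) :=
      le_ciSup (phiBN_bdd hβ0 _) m
    linarith

end Itin


section Orbit
variable {α β : ℝ} (hα0 : 0 ≤ α) (hα1 : α < 1) (hβ : 1 < β)

include hα0 hβ in
lemma kAB_cast : (kAB α β : ℝ) = (⌈α + β⌉ : ℤ) := by
  unfold kAB
  have h : ((⌈α + β⌉.toNat : ℤ) : ℤ) = ⌈α + β⌉ := Int.toNat_of_nonneg (Int.ceil_nonneg (by linarith))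
  exact_mod_cast h

include hα0 hβ in
lemma kAB_bounds : α + β ≤ (kAB α β : ℝ) ∧ (kAB α β : ℝ) < α + β + 1 ∧ 2 ≤ kAB α β := by
  have h1 := kAB_cast hα0 hβ
  refine ⟨h1 ▸ Int.le_ceil _, h1 ▸ Int.ceil_lt_add_one _, ?_⟩
  have h2 : (1 : ℝ) < α + β := by linarith
  have h3 : (1 : ℝ) < (kAB α β : ℝ) := lt_of_lt_of_le h2 (h1 ▸ Int.le_ceil _)
  have h4 : 1 < kAB α β := by exact_mod_cast h3
  omega

lemma Tlow_mem (t : ℝ) : 0 ≤ Tlow α β t ∧ Tlow α β t < 1 := by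
  unfold Tlow
  constructor
  · linarith [Int.floor_le (β * t + α)]
  · linarith [Int.lt_floor_add_one (β * t + α)]

lemma Thigh_mem (t : ℝ) : 0 < Thigh α β t ∧ Thigh α β t ≤ 1 := by
  unfold Thigh
  constructor
  · linarith [Int.ceil_lt_add_one (β * t + α)]
  · linarith [Int.le_ceil (β * t + α)]

include hα0 hβ in
omit hα0 hβ in
lemma Tlow_orbit_mem (n : ℕ) : 0 ≤ (Tlow α β)^[n] 0 ∧ (Tlow α β)^[n] 0 < 1 := by
  cases n with
  | zero => norm_num
  | succ n => rw [Function.iterate_succ_apply']; exact Tlow_mem _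

lemma Thigh_orbit_mem (n : ℕ) : 0 < (Thigh α β)^[n] 1 ∧ (Thigh α β)^[n] 1 ≤ 1 := by
  cases n with
  | zero => norm_num
  | succ n => rw [Function.iterate_succ_apply']; exact Thigh_mem _

include hα0 hβ in
lemma uItin_rec (n : ℕ) :
    (uItin α β n : ℝ) + (Tlow α β)^[n+1] 0 = β * (Tlow α β)^[n] 0 + α := by
  have h := Tlow_orbit_mem (α := α) (β := β) n
  have hfl : (0 : ℤ) ≤ ⌊β * (Tlow α β)^[n] 0 + α⌋ :=
    Int.floor_nonneg.mpr (by nlinarith)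
  have hcast : (uItin α β n : ℝ) = (⌊β * (Tlow α β)^[n] 0 + α⌋ : ℤ) := by
    unfold uItin
    have h2 : ((⌊β * (Tlow α β)^[n] 0 + α⌋.toNat : ℤ)) = ⌊β * (Tlow α β)^[n] 0 + α⌋ :=
      Int.toNat_of_nonneg hfl
    exact_mod_cast h2
  rw [hcast, Function.iterate_succ_apply']
  unfold Tlow
  ring

include hα0 hβ in
lemma vItin_rec (n : ℕ) :
    (vItin α β n : ℝ) + (Thigh α β)^[n+1] 1 = β * (Thigh α β)^[n] 1 + α := by
  have h := Thigh_orbit_mem (α := α) (β := β) n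
  have hcl : (1 : ℤ) ≤ ⌈β * (Thigh α β)^[n] 1 + α⌉ := by
    apply Int.le_ceil_iff.mpr
    norm_num
    nlinarith
  have hcast : (vItin α β n : ℝ) = ((⌈β * (Thigh α β)^[n] 1 + α⌉ - 1 : ℤ) : ℝ) := by
    unfold vItin
    have h2 : (((⌈β * (Thigh α β)^[n] 1 + α⌉ - 1).toNat : ℤ)) = ⌈β * (Thigh α β)^[n] 1 + α⌉ - 1 :=
      Int.toNat_of_nonneg (by omega)
    exact_mod_cast h2
  rw [hcast, Function.iterate_succ_apply']
  unfold Thigh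
  push_cast
  ring

include hα0 hβ in
lemma phiBInf_uItin (n : ℕ) : phiBInf α β (shft^[n] (uItin α β)) = (Tlow α β)^[n] 0 :=
  phiBInf_of_itinerary hβ _ _ (fun n => (Tlow_orbit_mem (α := α) (β := β) n).1)
    (fun n => (Tlow_orbit_mem (α := α) (β := β) n).2.le) (uItin_rec hα0 hβ) n

include hα0 hβ in
lemma phiBInf_vItin (n : ℕ) : phiBInf α β (shft^[n] (vItin α β)) = (Thigh α β)^[n] 1 :=
  phiBInf_of_itinerary hβ _ _ (fun n => (Thigh_orbit_mem n).1.le)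
    (fun n => (Thigh_orbit_mem n).2) (vItin_rec hα0 hβ) n

end Orbit

section Main
variable {α β : ℝ}

lemma trec (hβ0 : 0 < β) (x : ℕ → ℕ) (n : ℕ) :
    phiBInf α β (shft^[n] x) = phiB α β (x n + phiBInf α β (shft^[n+1] x)) := by
  rw [phiBInf_rec hβ0 (shft^[n] x), shft_shft_iter, shft_iter]
  norm_num

lemma case_zero (hα1 : α < 1) (hβ0 : 0 < β) {c : ℕ} {t' : ℝ}
    (h : phiB α β (c + t') = 0) (ht' : 0 ≤ t') : c = 0 ∧ t' ≤ α := by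
  have h1 := phiB_eq_zero hβ0 h
  have h2 : (c : ℝ) < 1 := by linarith
  have h3 : c = 0 := by exact_mod_cast Nat.lt_one_iff.mp (by exact_mod_cast h2)
  refine ⟨h3, ?_⟩
  rw [h3] at h1; simpa using h1

lemma case_one (hα0 : 0 ≤ α) (hβ : 1 < β) {c : ℕ} {t' : ℝ}
    (h : phiB α β (c + t') = 1) (ht1 : t' ≤ 1) (hck : c < kAB α β) :
    c + 1 = kAB α β ∧ α + β - kAB α β + 1 ≤ t' := by
  have hβ0 : 0 < β := by linarith
  have h1 := phiB_eq_one hβ0 h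
  obtain ⟨hk1, hk2, hk3⟩ := kAB_bounds hα0 hβ
  have h2 : (kAB α β : ℝ) < (c : ℝ) + 2 := by linarith
  have h3 : kAB α β < c + 2 := by exact_mod_cast h2
  have h4 : c + 1 = kAB α β := by omega
  refine ⟨h4, ?_⟩
  have h5 : (c : ℝ) = (kAB α β : ℝ) - 1 := by
    have : ((c + 1 : ℕ) : ℝ) = (kAB α β : ℝ) := by exact_mod_cast congrArg (Nat.cast : ℕ → ℝ) h4
    push_cast at this; linarith
  linarith

lemma case_mid (hβ0 : 0 < β) {c : ℕ} {t t' : ℝ}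
    (h : phiB α β (c + t') = t) (h0 : 0 < t) (h1 : t < 1) : (c : ℝ) + t' = β * t + α :=
  phiB_interior hβ0 h h0 h1

end Main

section Steps
variable {α β : ℝ} {u v : ℕ → ℕ}

/-- One step of the recursion for `u`, assuming all values `< 1`. -/
lemma step_u (hα0 : 0 ≤ α) (hα1 : α < 1) (hβ : 1 < β)
    (huα : phiBInf α β (shft u) = α)
    (hcondle : ∀ n, lexLe u (shft^[n] u))
    (h2 : ∀ m, phiBInf α β (shft^[m] u) < 1) (n : ℕ) :
    phiBInf α β (shft^[n+1] u) = Tlow α β (phiBInf α β (shft^[n] u)) ∧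
      (u n : ℤ) = ⌊β * phiBInf α β (shft^[n] u) + α⌋ := by
  have hβ0 : 0 < β := by linarith
  set t : ℕ → ℝ := fun n => phiBInf α β (shft^[n] u) with hts
  have hrecn : phiB α β (u n + t (n + 1)) = t n := (trec hβ0 u n).symm
  have ht0 : ∀ m, 0 ≤ t m := fun m => phiBInf_nonneg hβ0 _
  rcases eq_or_lt_of_le (ht0 n) with hz | hp
  · -- t n = 0
    obtain ⟨hc0, hta⟩ := case_zero hα1 hβ0 (hrecn.trans hz.symm) (ht0 (n + 1))
    have hlow : α ≤ t (n + 1) := by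
      have hsh : lexLe (shft u) (shft (shft^[n] u)) :=
        lexLe_shft (hcondle n) (by rw [shft_iter]; simp [hc0])
      rw [shft_shft_iter] at hsh
      have hm := phiBInf_mono_lex (α := α) hβ0 hsh
      rw [huα] at hm
      exact hm
    have hfl : ⌊β * t n + α⌋ = 0 := by
      rw [← hz]
      norm_num
      exact ⟨hα0, hα1⟩
    have htn1 : t (n + 1) = α := le_antisymm hta hlow
    constructor
    · show t (n + 1) = Tlow α β (t n)
      rw [htn1, ← hz]
      unfold Tlow
      rw [← hz] at hfl
      rw [hfl]
      norm_num
    · show (u n : ℤ) = ⌊β * t n + α⌋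
      rw [hc0, hfl]; norm_num
  · -- 0 < t n
    have hmid := case_mid hβ0 hrecn hp (h2 n)
    have hfl : ⌊β * t n + α⌋ = (u n : ℤ) := by
      rw [Int.floor_eq_iff]
      constructor
      · push_cast; linarith [ht0 (n + 1)]
      · push_cast; linarith [h2 (n + 1)]
    constructor
    · show t (n + 1) = Tlow α β (t n)
      unfold Tlow
      rw [hfl]
      push_cast
      linarith
    · exact hfl.symm

/-- One step of the recursion for `v`, assuming all values `> 0`. -/
lemma step_v (hα0 : 0 ≤ α) (hα1 : α < 1) (hβ : 1 < β)
    (hv : ∀ i, v i < kAB α β)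
    (hv1 : phiBInf α β v = 1)
    (hvγ : phiBInf α β (shft v) = α + β - kAB α β + 1)
    (hcondle : ∀ n, lexLe (shft^[n] v) v)
    (h3 : ∀ m, 0 < phiBInf α β (shft^[m] v)) (n : ℕ) :
    phiBInf α β (shft^[n+1] v) = Thigh α β (phiBInf α β (shft^[n] v)) ∧
      (v n : ℤ) = ⌈β * phiBInf α β (shft^[n] v) + α⌉ - 1 := by
  have hβ0 : 0 < β := by linarith
  obtain ⟨hk1, hk2, hk3⟩ := kAB_bounds hα0 hβ
  set s : ℕ → ℝ := fun n => phiBInf α β (shft^[n] v) with hss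
  have hrecn : phiB α β (v n + s (n + 1)) = s n := (trec hβ0 v n).symm
  have hrec0 : phiB α β (v 0 + s 1) = s 0 := (trec hβ0 v 0).symm
  have hs1 : ∀ m, s m ≤ 1 := fun m => phiBInf_le_one hβ0 _
  have hs00 : s 0 = 1 := by
    show phiBInf α β (shft^[0] v) = 1
    simpa using hv1
  rcases eq_or_lt_of_le (hs1 n) with ho | hlt
  · -- s n = 1
    obtain ⟨hcn, hsγ⟩ := case_one hα0 hβ (hrecn.trans ho) (hs1 (n + 1)) (hv n)
    obtain ⟨hc0, _⟩ := case_one hα0 hβ (hrec0.trans hs00) (hs1 1) (hv 0)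
    have hupp : s (n + 1) ≤ α + β - kAB α β + 1 := by
      have hsh : lexLe (shft (shft^[n] v)) (shft v) :=
        lexLe_shft (hcondle n) (by rw [shft_iter]; show v 0 ≤ v n; omega)
      rw [shft_shft_iter] at hsh
      have hm := phiBInf_mono_lex (α := α) hβ0 hsh
      rw [hvγ] at hm
      exact hm
    have hsn1 : s (n + 1) = α + β - kAB α β + 1 := le_antisymm hupp hsγ
    have hceil : (⌈α + β⌉ : ℤ) = (kAB α β : ℤ) := by
      have h := kAB_cast hα0 hβ
      exact_mod_cast (show ((⌈α + β⌉ : ℤ) : ℝ) = ((kAB α β : ℤ) : ℝ) by push_cast; exact_mod_cast h.symm)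
    constructor
    · show s (n + 1) = Thigh α β (s n)
      rw [hsn1]
      unfold Thigh
      rw [ho, show β * 1 + α = α + β by ring, hceil]
      push_cast
      ring
    · show (v n : ℤ) = ⌈β * s n + α⌉ - 1
      rw [ho, show β * 1 + α = α + β by ring, hceil]
      omega
  · -- s n < 1
    have hmid := case_mid hβ0 hrecn (h3 n) hlt
    have hceil : ⌈β * s n + α⌉ = (v n : ℤ) + 1 := by
      rw [Int.ceil_eq_iff]
      constructor
      · push_cast; linarith [h3 (n + 1)]
      · push_cast; linarith [hs1 (n + 1)]
    constructor
    · show s (n + 1) = Thigh α β (s n)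
      unfold Thigh
      rw [hceil]
      push_cast
      linarith
    · show (v n : ℤ) = ⌈β * s n + α⌉ - 1
      rw [hceil]; ring

end Steps

section Impl
variable {α β : ℝ} {u v : ℕ → ℕ}

lemma two_implies_one (hα0 : 0 ≤ α) (hα1 : α < 1) (hβ : 1 < β)
    (hu0 : phiBInf α β u = 0) (huα : phiBInf α β (shft u) = α)
    (hcondle : ∀ n, lexLe u (shft^[n] u))
    (h2 : ∀ m, phiBInf α β (shft^[m] u) < 1) : u = uItin α β := by
  have hβ0 : 0 < β := by linarith
  have main : ∀ n, phiBInf α β (shft^[n] u) = (Tlow α β)^[n] 0 := by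
    intro n
    induction n with
    | zero => simpa using hu0
    | succ n ih =>
      rw [Function.iterate_succ_apply' (Tlow α β), ← ih]
      exact (step_u hα0 hα1 hβ huα hcondle h2 n).1
  funext n
  have hu := (step_u hα0 hα1 hβ huα hcondle h2 n).2
  rw [main n] at hu
  unfold uItin
  have : ((u n : ℤ)).toNat = u n := Int.toNat_natCast (u n)
  rw [← hu, this]

lemma three_implies_four (hα0 : 0 ≤ α) (hα1 : α < 1) (hβ : 1 < β)
    (hv : ∀ i, v i < kAB α β)
    (hv1 : phiBInf α β v = 1)
    (hvγ : phiBInf α β (shft v) = α + β - kAB α β + 1)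
    (hcondle : ∀ n, lexLe (shft^[n] v) v)
    (h3 : ∀ m, 0 < phiBInf α β (shft^[m] v)) : v = vItin α β := by
  have hβ0 : 0 < β := by linarith
  have main : ∀ n, phiBInf α β (shft^[n] v) = (Thigh α β)^[n] 1 := by
    intro n
    induction n with
    | zero => simpa using hv1
    | succ n ih =>
      rw [Function.iterate_succ_apply' (Thigh α β), ← ih]
      exact (step_v hα0 hα1 hβ hv hv1 hvγ hcondle h3 n).1
  funext n
  have hvn := (step_v hα0 hα1 hβ hv hv1 hvγ hcondle h3 n).2
  rw [main n] at hvn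
  unfold vItin
  have : ((v n : ℤ)).toNat = v n := Int.toNat_natCast (v n)
  rw [← hvn, this]

lemma one_implies_two (hα0 : 0 ≤ α) (hβ : 1 < β) (h1 : u = uItin α β) (n : ℕ) :
    phiBInf α β (shft^[n] u) < 1 := by
  rw [h1, phiBInf_uItin hα0 hβ]
  exact (Tlow_orbit_mem (α := α) (β := β) n).2

lemma four_implies_three (hα0 : 0 ≤ α) (hβ : 1 < β) (h4 : v = vItin α β) (n : ℕ) :
    0 < phiBInf α β (shft^[n] v) := by
  rw [h4, phiBInf_vItin hα0 hβ]
  exact (Thigh_orbit_mem (α := α) (β := β) n).1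

end Impl

section Cross
variable {α β : ℝ} {u v : ℕ → ℕ}

lemma three_implies_two (hα0 : 0 ≤ α) (hα1 : α < 1) (hβ : 1 < β)
    (hu : ∀ i, u i < kAB α β) (hv : ∀ i, v i < kAB α β)
    (hv1 : phiBInf α β v = 1)
    (hvγ : phiBInf α β (shft v) = α + β - kAB α β + 1)
    (hcond2 : ∀ n, lexLt (shft^[n] u) v) (hcond4 : ∀ n, lexLe (shft^[n] v) v)
    (h3 : ∀ m, 0 < phiBInf α β (shft^[m] v)) : ∀ n, phiBInf α β (shft^[n] u) < 1 := by
  have hβ0 : 0 < β := by linarith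
  by_contra hcon
  push_neg at hcon
  obtain ⟨n, hn⟩ := hcon
  have hn1 : phiBInf α β (shft^[n] u) = 1 := le_antisymm (phiBInf_le_one hβ0 _) hn
  have hs1 : ∀ m, phiBInf α β (shft^[m] v) ≤ 1 := fun m => phiBInf_le_one hβ0 _
  have ht1 : ∀ m, phiBInf α β (shft^[m] u) ≤ 1 := fun m => phiBInf_le_one hβ0 _
  have hv00 : v 0 + 1 = kAB α β := by
    have hrec0 : phiB α β (v 0 + phiBInf α β (shft^[0+1] v)) = phiBInf α β (shft^[0] v) :=
      (trec hβ0 v 0).symm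
    have hz : phiBInf α β (shft^[0] v) = 1 := by simpa using hv1
    exact (case_one hα0 hβ (hrec0.trans hz) (hs1 1) (hv 0)).1
  have key : ∀ j, phiBInf α β (shft^[n+j] u) = phiBInf α β (shft^[j] v) →
      u (n+j) = v j →
      phiBInf α β (shft^[n+j+1] u) = phiBInf α β (shft^[j+1] v) := by
    intro j heq hcc
    have hrecu : phiB α β (u (n+j) + phiBInf α β (shft^[n+j+1] u)) =
        phiBInf α β (shft^[n+j] u) := (trec hβ0 u (n+j)).symm
    have hrecv : phiB α β (v j + phiBInf α β (shft^[j+1] v)) =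
        phiBInf α β (shft^[j] v) := (trec hβ0 v j).symm
    rcases eq_or_lt_of_le (hs1 j) with ho | hlt
    · -- s j = 1
      obtain ⟨hcu, htγ⟩ := case_one hα0 hβ (hrecu.trans (heq.trans ho)) (ht1 (n+j+1)) (hu (n+j))
      obtain ⟨hcv, hsγ⟩ := case_one hα0 hβ (hrecv.trans ho) (hs1 (j+1)) (hv j)
      have htup : phiBInf α β (shft^[n+j+1] u) ≤ α + β - kAB α β + 1 := by
        have hsh := lexLt_shft (hcond2 (n+j)) (by rw [shft_iter]; show v 0 ≤ u (n+j); omega)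
        rw [shft_shft_iter] at hsh
        have hm := phiBInf_mono_lex (α := α) hβ0 (Or.inr hsh)
        rwa [hvγ] at hm
      have hsup : phiBInf α β (shft^[j+1] v) ≤ α + β - kAB α β + 1 := by
        have hsh := lexLe_shft (hcond4 j) (by rw [shft_iter]; show v 0 ≤ v j; omega)
        rw [shft_shft_iter] at hsh
        have hm := phiBInf_mono_lex (α := α) hβ0 hsh
        rwa [hvγ] at hm
      exact (le_antisymm htup htγ).trans (le_antisymm hsup hsγ).symm
    · -- 0 < s j < 1
      have hmidv := case_mid hβ0 hrecv (h3 j) hlt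
      have hmidu := case_mid hβ0 (hrecu.trans heq) (h3 j) hlt
      have hce : (u (n+j) : ℝ) = (v j : ℝ) := by exact_mod_cast hcc
      linarith
  have base : ∀ j, phiBInf α β (shft^[n+j] u) = phiBInf α β (shft^[j] v) →
      u (n+j) < v j → False := by
    intro j heq hlt
    have hrecu : phiB α β (u (n+j) + phiBInf α β (shft^[n+j+1] u)) =
        phiBInf α β (shft^[n+j] u) := (trec hβ0 u (n+j)).symm
    have hrecv : phiB α β (v j + phiBInf α β (shft^[j+1] v)) =
        phiBInf α β (shft^[j] v) := (trec hβ0 v j).symm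
    rcases eq_or_lt_of_le (hs1 j) with ho | hslt
    · obtain ⟨hcu, _⟩ := case_one hα0 hβ (hrecu.trans (heq.trans ho)) (ht1 (n+j+1)) (hu (n+j))
      obtain ⟨hcv, _⟩ := case_one hα0 hβ (hrecv.trans ho) (hs1 (j+1)) (hv j)
      omega
    · have hmidv := case_mid hβ0 hrecv (h3 j) hslt
      have hmidu := case_mid hβ0 (hrecu.trans heq) (h3 j) hslt
      have hce : (u (n+j) : ℝ) + 1 ≤ (v j : ℝ) := by exact_mod_cast hlt
      have h1 := ht1 (n+j+1)
      have h2 := h3 (j+1)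
      linarith
  have claim : ∀ m j, phiBInf α β (shft^[n+j] u) = phiBInf α β (shft^[j] v) →
      (∀ i, i < m → u (n+j+i) = v (j+i)) → u (n+j+m) < v (j+m) → False := by
    intro m
    induction m with
    | zero =>
      intro j heq _ hlt
      exact base j heq (by simpa using hlt)
    | succ m ih =>
      intro j heq hag hlt
      have hcc : u (n+j) = v j := by simpa using hag 0 (Nat.succ_pos m)
      have hnext := key j heq hcc
      refine ih (j+1) ?_ ?_ ?_
      · rw [show n+(j+1) = n+j+1 from by omega]; exact hnext
      · intro i hi
        have h := hag (i+1) (by omega)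
        rw [show n+(j+1)+i = n+j+(i+1) from by omega, show (j+1)+i = j+(i+1) from by omega]
        exact h
      · rw [show n+(j+1)+m = n+j+(m+1) from by omega, show (j+1)+m = j+(m+1) from by omega]
        exact hlt
  obtain ⟨m, hag, hlt⟩ := hcond2 n
  refine claim m 0 ?_ ?_ ?_
  · show phiBInf α β (shft^[n] u) = phiBInf α β (shft^[0] v)
    rw [hn1]
    simpa using hv1.symm
  · intro i hi
    have h := hag i hi
    rw [shft_iter] at h
    simpa using h
  · have h := hlt
    rw [shft_iter] at h
    simpa using h

lemma two_implies_three (hα0 : 0 ≤ α) (hα1 : α < 1) (hβ : 1 < β)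
    (hu0 : phiBInf α β u = 0) (huα : phiBInf α β (shft u) = α)
    (hcond1 : ∀ n, lexLe u (shft^[n] u)) (hcond3 : ∀ n, lexLt u (shft^[n] v))
    (h2 : ∀ m, phiBInf α β (shft^[m] u) < 1) : ∀ m, 0 < phiBInf α β (shft^[m] v) := by
  have hβ0 : 0 < β := by linarith
  by_contra hcon
  push_neg at hcon
  obtain ⟨n, hn⟩ := hcon
  have hn0 : phiBInf α β (shft^[n] v) = 0 := le_antisymm hn (phiBInf_nonneg hβ0 _)
  have ht0 : ∀ m, 0 ≤ phiBInf α β (shft^[m] u) := fun m => phiBInf_nonneg hβ0 _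
  have hs0 : ∀ m, 0 ≤ phiBInf α β (shft^[m] v) := fun m => phiBInf_nonneg hβ0 _
  have key : ∀ j, phiBInf α β (shft^[j] u) = phiBInf α β (shft^[n+j] v) →
      u j = v (n+j) →
      phiBInf α β (shft^[j+1] u) = phiBInf α β (shft^[n+j+1] v) := by
    intro j heq hcc
    have hrecu : phiB α β (u j + phiBInf α β (shft^[j+1] u)) =
        phiBInf α β (shft^[j] u) := (trec hβ0 u j).symm
    have hrecv : phiB α β (v (n+j) + phiBInf α β (shft^[n+j+1] v)) =
        phiBInf α β (shft^[n+j] v) := (trec hβ0 v (n+j)).symm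
    rcases eq_or_lt_of_le (ht0 j) with ho | hpos
    · -- t j = 0
      obtain ⟨hcu, hta⟩ := case_zero hα1 hβ0 (hrecu.trans ho.symm) (ht0 (j+1))
      obtain ⟨hcv, hsa⟩ := case_zero hα1 hβ0 (hrecv.trans (heq ▸ ho.symm)) (hs0 (n+j+1))
      have htlow : α ≤ phiBInf α β (shft^[j+1] u) := by
        have hsh := lexLe_shft (hcond1 j) (by rw [shft_iter]; show u j ≤ u 0; omega)
        rw [shft_shft_iter] at hsh
        have hm := phiBInf_mono_lex (α := α) hβ0 hsh
        rwa [huα] at hm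
      have hslow : α ≤ phiBInf α β (shft^[n+j+1] v) := by
        have hsh := lexLt_shft (hcond3 (n+j)) (by rw [shft_iter]; show v (n+j) ≤ u 0; omega)
        rw [shft_shft_iter] at hsh
        have hm := phiBInf_mono_lex (α := α) hβ0 (Or.inr hsh)
        rwa [huα] at hm
      exact (le_antisymm hta htlow).trans (le_antisymm hsa hslow).symm
    · -- 0 < t j < 1
      have hmidu := case_mid hβ0 hrecu hpos (h2 j)
      have hmidv := case_mid hβ0 (hrecv.trans heq.symm) hpos (h2 j)
      have hce : (u j : ℝ) = (v (n+j) : ℝ) := by exact_mod_cast hcc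
      linarith
  have base : ∀ j, phiBInf α β (shft^[j] u) = phiBInf α β (shft^[n+j] v) →
      u j < v (n+j) → False := by
    intro j heq hlt
    have hrecu : phiB α β (u j + phiBInf α β (shft^[j+1] u)) =
        phiBInf α β (shft^[j] u) := (trec hβ0 u j).symm
    have hrecv : phiB α β (v (n+j) + phiBInf α β (shft^[n+j+1] v)) =
        phiBInf α β (shft^[n+j] v) := (trec hβ0 v (n+j)).symm
    rcases eq_or_lt_of_le (ht0 j) with ho | hpos
    · obtain ⟨hcv, _⟩ := case_zero hα1 hβ0 (hrecv.trans (heq ▸ ho.symm)) (hs0 (n+j+1))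
      omega
    · have hmidu := case_mid hβ0 hrecu hpos (h2 j)
      have hmidv := case_mid hβ0 (hrecv.trans heq.symm) hpos (h2 j)
      have hce : (u j : ℝ) + 1 ≤ (v (n+j) : ℝ) := by exact_mod_cast hlt
      have ha := h2 (j+1)
      have hb := hs0 (n+j+1)
      linarith
  have claim : ∀ m j, phiBInf α β (shft^[j] u) = phiBInf α β (shft^[n+j] v) →
      (∀ i, i < m → u (j+i) = v (n+j+i)) → u (j+m) < v (n+j+m) → False := by
    intro m
    induction m with
    | zero =>
      intro j heq _ hlt
      exact base j heq (by simpa using hlt)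
    | succ m ih =>
      intro j heq hag hlt
      have hcc : u j = v (n+j) := by simpa using hag 0 (Nat.succ_pos m)
      have hnext := key j heq hcc
      refine ih (j+1) ?_ ?_ ?_
      · rw [show n+(j+1) = n+j+1 from by omega]; exact hnext
      · intro i hi
        have h := hag (i+1) (by omega)
        rw [show (j+1)+i = j+(i+1) from by omega, show n+(j+1)+i = n+j+(i+1) from by omega]
        exact h
      · rw [show (j+1)+m = j+(m+1) from by omega, show n+(j+1)+m = n+j+(m+1) from by omega]
        exact hlt
  obtain ⟨m, hag, hlt⟩ := hcond3 n
  refine claim m 0 ?_ ?_ ?_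
  · show phiBInf α β (shft^[0] u) = phiBInf α β (shft^[n] v)
    rw [hn0]
    simpa using hu0
  · intro i hi
    have h := hag i hi
    rw [shft_iter] at h
    simpa using h
  · have h := hlt
    rw [shft_iter] at h
    simpa using h

end Cross

/-- **Recognition of virtual itineraries.** Let `0 ≤ α < 1 < β`, `k = ⌈α+β⌉`,
`γ = α+β−k+1`. Suppose `u, v ∈ A^ℕ` satisfy `φ̄_∞^{α,β}(u) = 0`, `φ̄_∞^{α,β}(σu) = α`,
`φ̄_∞^{α,β}(v) = 1`, `φ̄_∞^{α,β}(σv) = γ`, and `u ≼ σⁿu ≺ v`, `u ≺ σⁿv ≼ v` for all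
`n ≥ 0`. Then the following are equivalent: (1) `u = u^{α,β}`;
(2) `φ̄_∞^{α,β}(σⁿu) < 1` for all `n ≥ 0`; (3) `φ̄_∞^{α,β}(σⁿv) > 0` for all `n ≥ 0`;
(4) `v = v^{α,β}`. -/
theorem recognition_of_itineraries (α β : ℝ) (hα0 : 0 ≤ α) (hα1 : α < 1) (hβ : 1 < β)
    (u v : ℕ → ℕ) (hu : ∀ i, u i < kAB α β) (hv : ∀ i, v i < kAB α β)
    (hu0 : phiBInf α β u = 0) (huα : phiBInf α β (shft u) = α)
    (hv1 : phiBInf α β v = 1)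
    (hvγ : phiBInf α β (shft v) = α + β - kAB α β + 1)
    (hcond : ∀ n, lexLe u (shft^[n] u) ∧ lexLt (shft^[n] u) v ∧
                  lexLt u (shft^[n] v) ∧ lexLe (shft^[n] v) v) :
    ((u = uItin α β) ↔ (∀ n, phiBInf α β (shft^[n] u) < 1)) ∧
    ((∀ n, phiBInf α β (shft^[n] u) < 1) ↔ (∀ n, 0 < phiBInf α β (shft^[n] v))) ∧
    ((∀ n, 0 < phiBInf α β (shft^[n] v)) ↔ (v = vItin α β)) := by
  refine ⟨⟨fun h1 n => one_implies_two hα0 hβ h1 n, ?_⟩,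
    ⟨fun h2 => two_implies_three hα0 hα1 hβ hu0 huα (fun n => (hcond n).1)
        (fun n => (hcond n).2.2.1) h2,
      fun h3 => three_implies_two hα0 hα1 hβ hu hv hv1 hvγ (fun n => (hcond n).2.1)
        (fun n => (hcond n).2.2.2) h3⟩,
    ⟨fun h3 => three_implies_four hα0 hα1 hβ hv hv1 hvγ (fun n => (hcond n).2.2.2) h3,
      fun h4 n => four_implies_three hα0 hβ h4 n⟩⟩
  exact fun h2 => two_implies_one hα0 hα1 hβ hu0 huα (fun n => (hcond n).1) h2
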